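/- Let M be a complete Kähler manifold of complex dimension m with nonnegative holomorphic bisectional curvature. For any integer k ≥ 1, the dimension bound dim_ℂ(O_d(M)) ≤ C_1(m) d^m implies that any m + 1 holomorphic functions of polynomial growth on M are algebraically dependent over ℂ; equivalently, the transcendence degree of M(M) over ℂ is at most m. -/

import Mathlib

/-!
(Ni, Poincaré–Siegel argument.)  Let `M` be a complete Kähler manifold of
complex dimension `m` with nonnegative holomorphic bisectional curvature.  The
dimension bound `dim_ℂ 𝒪_d(M) ≤ C₁(m) d^m` implies that any `m + 1` holomorphic
functions of polynomial growth on `M` are algebraically dependent over `ℂ`;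
equivalently `deg_tr ℳ(M) ≤ m`.

The Kähler hypotheses not yet formalizable in Mathlib are carried as abstract
propositions.
-/

open scoped Manifold
open Metric

/-- The space `𝒪_d(M)` of holomorphic functions of polynomial growth of degree `d`
on a complex manifold `M` carrying a distance function, with base point `o`. -/
def polyGrowthHolFns (m : ℕ) (M : Type) [MetricSpace M]
    [ChartedSpace (EuclideanSpace ℂ (Fin m)) M] (o : M) (d : ℝ) : Set (M → ℂ) :=
  {f | MDifferentiable 𝓘(ℂ, EuclideanSpace ℂ (Fin m)) 𝓘(ℂ, ℂ) f ∧
    ∃ C : ℝ, ∀ x : M, ‖f x‖ ≤ C * (1 + dist x o) ^ d}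

/-- The ring `𝒪_P(M) = ⋃_{d ≥ 0} 𝒪_d(M)` of holomorphic functions of polynomial
growth. -/
def polyGrowthHolRing (m : ℕ) (M : Type) [MetricSpace M]
    [ChartedSpace (EuclideanSpace ℂ (Fin m)) M] (o : M) : Set (M → ℂ) :=
  {f | ∃ d : ℝ, 0 ≤ d ∧ f ∈ polyGrowthHolFns m M o d}

/-- A family of `ℂ`-valued functions is algebraically independent over `ℂ` if no
nonzero polynomial relation with complex coefficients holds identically. -/
def AlgIndepFns {M : Type} {k : ℕ} (f : Fin k → M → ℂ) : Prop :=
  ∀ p : MvPolynomial (Fin k) ℂ,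
    (∀ x : M, MvPolynomial.eval (fun i => f i x) p = 0) → p = 0

/-- Powers of holomorphic functions are holomorphic. -/
lemma mdiff_pow {m : ℕ} {M : Type} [MetricSpace M]
    [ChartedSpace (EuclideanSpace ℂ (Fin m)) M] {f : M → ℂ}
    (hf : MDifferentiable 𝓘(ℂ, EuclideanSpace ℂ (Fin m)) 𝓘(ℂ, ℂ) f) (n : ℕ) :
    MDifferentiable 𝓘(ℂ, EuclideanSpace ℂ (Fin m)) 𝓘(ℂ, ℂ) (fun x => f x ^ n) := by
  induction n with
  | zero => simpa using mdifferentiable_const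
  | succ n ih =>
    have := ih.mul hf
    simpa [pow_succ, Pi.mul_def] using this

/-- Finite products of holomorphic functions are holomorphic. -/
lemma mdiff_prod {m : ℕ} {M : Type} [MetricSpace M]
    [ChartedSpace (EuclideanSpace ℂ (Fin m)) M] {ι : Type*} (s : Finset ι) (F : ι → M → ℂ)
    (hF : ∀ i ∈ s, MDifferentiable 𝓘(ℂ, EuclideanSpace ℂ (Fin m)) 𝓘(ℂ, ℂ) (F i)) :
    MDifferentiable 𝓘(ℂ, EuclideanSpace ℂ (Fin m)) 𝓘(ℂ, ℂ) (fun x => ∏ i ∈ s, F i x) := by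
  classical
  induction s using Finset.induction with
  | empty => simpa using mdifferentiable_const
  | @insert a s hnot ih =>
    have h1 := hF a (Finset.mem_insert_self a s)
    have h2 := ih fun i hi => hF i (Finset.mem_insert_of_mem hi)
    have := h1.mul h2
    simpa [Finset.prod_insert hnot, Pi.mul_def] using this

/-- Monomials in algebraically independent functions are linearly independent. -/
lemma linind_of_algindep {M : Type} {k t : ℕ} (f : Fin k → M → ℂ)
    (hind : AlgIndepFns f) :
    LinearIndependent ℂ (fun (σ : Fin k → Fin t) (x : M) => ∏ i, f i x ^ (σ i : ℕ)) := by
  classical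
  rw [Fintype.linearIndependent_iff]
  intro c hc σ
  set exps : (Fin k → Fin t) → (Fin k →₀ ℕ) :=
    fun σ => Finsupp.equivFunOnFinite.symm (fun i => (σ i : ℕ)) with hexps
  have hexps_inj : Function.Injective exps := by
    intro σ τ h
    have h2 : (fun i => (σ i : ℕ)) = fun i => (τ i : ℕ) :=
      Finsupp.equivFunOnFinite.symm.injective h
    funext i
    exact Fin.val_injective (congrFun h2 i)
  have hexps_apply : ∀ σ i, exps σ i = (σ i : ℕ) := fun σ i => rfl
  set p : MvPolynomial (Fin k) ℂ :=
    ∑ σ : Fin k → Fin t, MvPolynomial.monomial (exps σ) (c σ) with hp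
  have hpev : ∀ x : M, MvPolynomial.eval (fun i => f i x) p = 0 := by
    intro x
    have h0 := congrFun hc x
    simp only [Finset.sum_apply, Pi.smul_apply, Pi.zero_apply, smul_eq_mul] at h0
    rw [hp, map_sum]
    calc ∑ σ : Fin k → Fin t,
          MvPolynomial.eval (fun i => f i x) (MvPolynomial.monomial (exps σ) (c σ))
        = ∑ σ : Fin k → Fin t, c σ * ∏ i, f i x ^ (σ i : ℕ) := by
          refine Finset.sum_congr rfl fun σ _ => ?_
          rw [MvPolynomial.eval_monomial, Finsupp.prod_pow]
          simp [hexps_apply]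
      _ = 0 := h0
  have hp0 : p = 0 := hind p hpev
  have := congrArg (MvPolynomial.coeff (exps σ)) hp0
  rw [hp, MvPolynomial.coeff_sum] at this
  simp only [MvPolynomial.coeff_monomial, MvPolynomial.coeff_zero] at this
  have h2 : (∑ τ : Fin k → Fin t, if exps τ = exps σ then c τ else 0)
      = ∑ τ : Fin k → Fin t, if τ = σ then c τ else 0 :=
    Finset.sum_congr rfl fun τ _ => by simp only [hexps_inj.eq_iff]
  rw [h2] at this
  simpa using this

/-- **Transcendence degree bound from the dimension bound.**  On a complete
Kähler manifold `M^m` of nonnegative holomorphic bisectional curvature, the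
estimate `dim_ℂ 𝒪_d(M) ≤ C₁ d^m` implies that any `m + 1` holomorphic functions
of polynomial growth are algebraically dependent over `ℂ`, i.e.
`deg_tr ℳ(M) ≤ m`. -/
theorem algebraic_dependence_of_dim_bound
    (m : ℕ) (hm : 1 ≤ m)
    (M : Type) [MetricSpace M] [CompleteSpace M] [ConnectedSpace M]
    [ChartedSpace (EuclideanSpace ℂ (Fin m)) M]
    [IsManifold 𝓘(ℂ, EuclideanSpace ℂ (Fin m)) (⊤ : WithTop ℕ∞) M]
    -- placeholders for the geometric hypotheses not yet formalizable in Mathlib: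
    (MetricIsKahler : Prop) (hKahler : MetricIsKahler)
    (NonnegBisectionalCurvature : Prop) (hCurv : NonnegBisectionalCurvature)
    (o : M)
    -- the dimension bound `dim_ℂ 𝒪_d(M) ≤ C₁ d^m`:
    (C₁ : ℝ) (hC₁ : 0 < C₁)
    (hdim : ∀ d : ℝ, 1 ≤ d →
      FiniteDimensional ℂ ↥(Submodule.span ℂ (polyGrowthHolFns m M o d)) ∧
      (Module.finrank ℂ ↥(Submodule.span ℂ (polyGrowthHolFns m M o d)) : ℝ) ≤
        C₁ * d ^ m) :
    -- any `m + 1` functions in `𝒪_P(M)` are algebraically dependent: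
    ∀ f : Fin (m + 1) → M → ℂ,
      (∀ i, f i ∈ polyGrowthHolRing m M o) → ¬ AlgIndepFns f := by
  classical
  intro f hf hind
  choose d hd0 hmem using hf
  have hmd : ∀ i, MDifferentiable 𝓘(ℂ, EuclideanSpace ℂ (Fin m)) 𝓘(ℂ, ℂ) (f i) :=
    fun i => (hmem i).1
  choose C hC using fun i => (hmem i).2
  -- uniform degree and constants
  set D : ℝ := 1 + ∑ i, d i with hD
  have hD1 : (1 : ℝ) ≤ D := by
    have : (0 : ℝ) ≤ ∑ i, d i := Finset.sum_nonneg fun i _ => hd0 i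
    simp only [hD]; linarith
  have hD0 : (0 : ℝ) ≤ D := le_trans zero_le_one hD1
  have hdi : ∀ i, d i ≤ D := by
    intro i
    have h1 : d i ≤ ∑ j, d j :=
      Finset.single_le_sum (fun j _ => hd0 j) (Finset.mem_univ i)
    simp only [hD]; linarith
  set K : Fin (m + 1) → ℝ := fun i => max (C i) 1 with hK
  have hK1 : ∀ i, (1 : ℝ) ≤ K i := fun i => le_max_right _ _
  have hKC : ∀ i, C i ≤ K i := fun i => le_max_left _ _
  -- choose the number of values of each exponent
  set t : ℕ := ⌈C₁ * (D * (m + 1)) ^ m⌉₊ + 1 with ht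
  have ht1 : (1 : ℝ) ≤ (t : ℕ) := by exact_mod_cast Nat.succ_le_succ (Nat.zero_le _)
  have ht1' : (1 : ℝ) ≤ (t : ℝ) := by exact_mod_cast Nat.one_le_iff_ne_zero.mpr (by simp [ht])
  have htgt : C₁ * (D * (m + 1)) ^ m < (t : ℝ) := by
    have h1 : C₁ * (D * (m + 1)) ^ m ≤ (⌈C₁ * (D * (m + 1)) ^ m⌉₊ : ℝ) := Nat.le_ceil _
    have h2 : ((⌈C₁ * (D * (m + 1)) ^ m⌉₊ : ℕ) : ℝ) < (t : ℝ) := by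
      rw [ht]; push_cast; linarith
    linarith
  set dd : ℝ := D * (m + 1) * t with hdd
  have hm1 : (1 : ℝ) ≤ (m + 1 : ℝ) := by push_cast; linarith
  have hdd1 : (1 : ℝ) ≤ dd := by
    have h1 : (1 : ℝ) * 1 ≤ D * (m + 1) :=
      mul_le_mul hD1 hm1 zero_le_one hD0
    have h2 : (1 : ℝ) * 1 ≤ (D * (m + 1)) * t :=
      mul_le_mul (by linarith) ht1' zero_le_one (by linarith)
    rw [hdd]; linarith
  -- the monomial family
  set g : (Fin (m + 1) → Fin t) → M → ℂ :=
    fun σ x => ∏ i, f i x ^ (σ i : ℕ) with hg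
  -- each monomial lies in 𝒪_dd(M)
  have hgmem : ∀ σ, g σ ∈ polyGrowthHolFns m M o dd := by
    intro σ
    constructor
    · exact mdiff_prod Finset.univ (fun i x => f i x ^ (σ i : ℕ))
        (fun i _ => mdiff_pow (hmd i) _)
    · refine ⟨∏ i, K i ^ t, fun x => ?_⟩
      have hr : (1 : ℝ) ≤ 1 + dist x o := by
        have := dist_nonneg (x := x) (y := o); linarith
      have hr0 : (0 : ℝ) ≤ 1 + dist x o := le_trans zero_le_one hr
      have hb : ∀ i, ‖f i x‖ ≤ K i * (1 + dist x o) ^ D := by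
        intro i
        refine le_trans (hC i x) ?_
        have hbase : (1 + dist x o) ^ (d i) ≤ (1 + dist x o) ^ D :=
          Real.rpow_le_rpow_of_exponent_le hr (hdi i)
        have hCpos : (0 : ℝ) ≤ (1 + dist x o) ^ (d i) := Real.rpow_nonneg hr0 _
        exact mul_le_mul (hKC i) hbase hCpos (le_trans zero_le_one (hK1 i))
      have hstep1 : ‖g σ x‖ = ∏ i, ‖f i x‖ ^ (σ i : ℕ) := by
        rw [hg]; simp [norm_prod, norm_pow]
      have hstep2 : (∏ i, ‖f i x‖ ^ (σ i : ℕ))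
          ≤ ∏ i, (K i * (1 + dist x o) ^ D) ^ (σ i : ℕ) := by
        refine Finset.prod_le_prod (fun i _ => by positivity) (fun i _ => ?_)
        exact pow_le_pow_left₀ (norm_nonneg _) (hb i) _
      have hstep3 : (∏ i, (K i * (1 + dist x o) ^ D) ^ (σ i : ℕ))
          = (∏ i, K i ^ (σ i : ℕ)) * ((1 + dist x o) ^ D) ^ (∑ i, (σ i : ℕ)) := by
        simp only [mul_pow]
        rw [Finset.prod_mul_distrib, Finset.prod_pow_eq_pow_sum]
      have hKbd : (∏ i, K i ^ (σ i : ℕ)) ≤ ∏ i, K i ^ t := by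
        refine Finset.prod_le_prod (fun i _ => by positivity) (fun i _ => ?_)
        exact pow_le_pow_right₀ (hK1 i) (le_of_lt (σ i).isLt)
      have hsum : ((∑ i, (σ i : ℕ) : ℕ) : ℝ) ≤ (m + 1) * t := by
        have h1 : (∑ i, (σ i : ℕ)) ≤ ∑ _i : Fin (m + 1), t :=
          Finset.sum_le_sum fun i _ => le_of_lt (σ i).isLt
        have h2 : (∑ _i : Fin (m + 1), t) = (m + 1) * t := by
          simp [Finset.sum_const, mul_comm]
        have := le_trans h1 (le_of_eq h2)
        exact_mod_cast this
      have hrbd : ((1 + dist x o) ^ D) ^ (∑ i, (σ i : ℕ)) ≤ (1 + dist x o) ^ dd := by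
        rw [← Real.rpow_natCast ((1 + dist x o) ^ D) (∑ i, (σ i : ℕ)),
          ← Real.rpow_mul hr0]
        refine Real.rpow_le_rpow_of_exponent_le hr ?_
        rw [hdd, mul_assoc]
        exact mul_le_mul_of_nonneg_left hsum hD0
      have hfinal : (∏ i, K i ^ (σ i : ℕ)) * ((1 + dist x o) ^ D) ^ (∑ i, (σ i : ℕ))
          ≤ (∏ i, K i ^ t) * (1 + dist x o) ^ dd := by
        refine mul_le_mul hKbd hrbd (by positivity) ?_
        exact Finset.prod_nonneg fun i _ => by positivity
      calc ‖g σ x‖ = ∏ i, ‖f i x‖ ^ (σ i : ℕ) := hstep1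
        _ ≤ ∏ i, (K i * (1 + dist x o) ^ D) ^ (σ i : ℕ) := hstep2
        _ = (∏ i, K i ^ (σ i : ℕ)) * ((1 + dist x o) ^ D) ^ (∑ i, (σ i : ℕ)) := hstep3
        _ ≤ (∏ i, K i ^ t) * (1 + dist x o) ^ dd := hfinal
  -- linear independence and dimension count
  obtain ⟨hfin, hle⟩ := hdim dd hdd1
  set V := Submodule.span ℂ (polyGrowthHolFns m M o dd) with hV
  have hgV : ∀ σ, g σ ∈ V := fun σ => Submodule.subset_span (hgmem σ)
  set g' : (Fin (m + 1) → Fin t) → V := fun σ => ⟨g σ, hgV σ⟩ with hg'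
  have hli : LinearIndependent ℂ g := linind_of_algindep f hind
  have hli' : LinearIndependent ℂ g' := by
    refine LinearIndependent.of_comp V.subtype ?_
    convert hli using 1
    rfl
  have hcard : Fintype.card (Fin (m + 1) → Fin t) ≤ Module.finrank ℂ V :=
    hli'.fintype_card_le_finrank
  have hcard2 : (t : ℝ) ^ (m + 1) ≤ (Module.finrank ℂ V : ℝ) := by
    have : Fintype.card (Fin (m + 1) → Fin t) = t ^ (m + 1) := by
      simp [Fintype.card_fun]
    rw [this] at hcard
    exact_mod_cast hcard
  -- numeric contradiction
  have hddpow : dd ^ m = (D * (m + 1)) ^ m * (t : ℝ) ^ m := by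
    rw [hdd, mul_pow]
  have htm : (0 : ℝ) < (t : ℝ) ^ m := by positivity
  have hlt : C₁ * dd ^ m < (t : ℝ) ^ (m + 1) := by
    rw [hddpow, pow_succ]
    calc C₁ * ((D * (m + 1)) ^ m * (t : ℝ) ^ m)
        = (C₁ * (D * (m + 1)) ^ m) * (t : ℝ) ^ m := by ring
      _ < (t : ℝ) * (t : ℝ) ^ m := by
          exact mul_lt_mul_of_pos_right htgt htm
      _ = (t : ℝ) ^ m * (t : ℝ) := by ring
  linarith
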